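/- Let G be a Cameron–Walker graph in standard form. Then every independent dominating set (independent set A with A ∪ N_G(A) = V(G)) has size at least m + #{j : t_j > 0}. -/

import Mathlib

/-- A finite set of vertices is independent in `G` if no two of its members are adjacent. -/
def SimpleGraph.IsIndepFinset {V : Type*} (G : SimpleGraph V) (A : Finset V) : Prop :=
  ∀ u ∈ A, ∀ v ∈ A, ¬ G.Adj u v

/-- `A` is an independent dominating set of `G`: `A` is independent and
`A ∪ N_G(A) = V(G)`, i.e. every vertex is in `A` or adjacent to a member of `A`. -/
def SimpleGraph.IsIndepDomFinset {V : Type*} (G : SimpleGraph V) (A : Finset V) : Prop :=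
  G.IsIndepFinset A ∧ ∀ v : V, v ∈ A ∨ ∃ u ∈ A, G.Adj u v

/-- The vertex set of a Cameron–Walker graph in standard form:
the `vᵢ` (`i : Fin m`), the `w_j` (`j : Fin p`), the `sᵢ` leaves attached to `vᵢ`,
and the two extra vertices of each of the `t_j` pendant triangles attached to `w_j`. -/
abbrev CWVert (m p : ℕ) (s : Fin m → ℕ) (t : Fin p → ℕ) : Type :=
  (Fin m) ⊕ (Fin p) ⊕ (Σ i : Fin m, Fin (s i)) ⊕ (Σ j : Fin p, Fin (t j) × Fin 2)

/-- The Cameron–Walker graph in standard form: a bipartite graph between the `vᵢ`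
and the `w_j` with edge relation `E`, together with `sᵢ` pendant leaves at each `vᵢ`
and `t_j` pendant triangles at each `w_j`. -/
def CWGraph (m p : ℕ) (E : Fin m → Fin p → Prop) (s : Fin m → ℕ) (t : Fin p → ℕ) :
    SimpleGraph (CWVert m p s t) :=
  SimpleGraph.fromRel (fun u v =>
    match u, v with
    | Sum.inl i, Sum.inr (Sum.inl j) => E i j
    | Sum.inl i, Sum.inr (Sum.inr (Sum.inl ⟨i', _⟩)) => i = i'
    | Sum.inr (Sum.inl j), Sum.inr (Sum.inr (Sum.inr ⟨j', _⟩)) => j = j'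
    | Sum.inr (Sum.inr (Sum.inr ⟨j, l, _⟩)), Sum.inr (Sum.inr (Sum.inr ⟨j', l', _⟩)) =>
        j = j' ∧ HEq l l'
    | _, _ => False)

/-- The bipartite part of the Cameron–Walker graph, as a graph on `{v₁,…,vₘ} ∪ {w₁,…,w_p}`. -/
def CWBip (m p : ℕ) (E : Fin m → Fin p → Prop) : SimpleGraph ((Fin m) ⊕ (Fin p)) :=
  SimpleGraph.fromRel (fun u v =>
    match u, v with
    | Sum.inl i, Sum.inr j => E i j
    | _, _ => False)

/-- Project out the `Fin m` index of a `v`-vertex or a leaf. -/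
def CWrho {m p : ℕ} {s : Fin m → ℕ} {t : Fin p → ℕ} : CWVert m p s t → Option (Fin m)
  | Sum.inl i => some i
  | Sum.inr (Sum.inr (Sum.inl ⟨i, _⟩)) => some i
  | _ => none

/-- Project out the `Fin p` index of a `w`-vertex or a triangle vertex. -/
def CWpi {m p : ℕ} {s : Fin m → ℕ} {t : Fin p → ℕ} : CWVert m p s t → Option (Fin p)
  | Sum.inr (Sum.inl j) => some j
  | Sum.inr (Sum.inr (Sum.inr ⟨j, _⟩)) => some j
  | _ => none


/-- every independent dominating set of a Cameron–Walker graph in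
standard form has size at least `m + #{j : t_j > 0}`. -/
theorem stmt_14 (m p : ℕ) (hm : 1 ≤ m) (hp : 1 ≤ p) (E : Fin m → Fin p → Prop)
    (s : Fin m → ℕ) (t : Fin p → ℕ) (hs : ∀ i, 1 ≤ s i)
    (hconn : (CWBip m p E).Connected)
    (A : Finset (CWVert m p s t)) (hA : (CWGraph m p E s t).IsIndepDomFinset A) :
    m + (Finset.univ.filter (fun j : Fin p => 0 < t j)).card ≤ A.card := by
  classical
  obtain ⟨hind, hdom⟩ := hA
  -- Step 1: for each i, either vᵢ or its first leaf is in A.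
  have key1 : ∀ i : Fin m,
      Sum.inl i ∈ A ∨ (Sum.inr (Sum.inr (Sum.inl ⟨i, ⟨0, hs i⟩⟩)) : CWVert m p s t) ∈ A := by
    intro i
    rcases hdom (Sum.inr (Sum.inr (Sum.inl ⟨i, ⟨0, hs i⟩⟩))) with h | ⟨u, hu, hadj⟩
    · exact Or.inr h
    · left
      rw [CWGraph, SimpleGraph.fromRel_adj] at hadj
      obtain ⟨hne, h | h⟩ := hadj
      · rcases u with i' | j' | ⟨i', k⟩ | ⟨j', l, c⟩
        · cases h; exact hu
        · exact h.elim
        · exact h.elim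
        · exact h.elim
      · rcases u with i' | j' | ⟨i', k⟩ | ⟨j', l, c⟩ <;> exact h.elim
  -- Step 2: for each j with t j > 0, one of w_j or the two first-triangle vertices is in A.
  have key2 : ∀ j : Fin p, ∀ ht : 0 < t j,
      Sum.inr (Sum.inl j) ∈ A ∨
      (Sum.inr (Sum.inr (Sum.inr ⟨j, (⟨0, ht⟩, 0)⟩)) : CWVert m p s t) ∈ A ∨
      (Sum.inr (Sum.inr (Sum.inr ⟨j, (⟨0, ht⟩, 1)⟩)) : CWVert m p s t) ∈ A := by
    intro j ht
    rcases hdom (Sum.inr (Sum.inr (Sum.inr ⟨j, (⟨0, ht⟩, 0)⟩))) with h | ⟨u, hu, hadj⟩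
    · exact Or.inr (Or.inl h)
    · rw [CWGraph, SimpleGraph.fromRel_adj] at hadj
      obtain ⟨hne, h | h⟩ := hadj
      · rcases u with i' | j' | ⟨i', k⟩ | ⟨j', l, c⟩
        · exact h.elim
        · cases h; exact Or.inl hu
        · exact h.elim
        · obtain ⟨rfl, hl⟩ := h
          obtain rfl := eq_of_heq hl
          fin_cases c
          · exact absurd rfl hne
          · exact Or.inr (Or.inr hu)
      · rcases u with i' | j' | ⟨i', k⟩ | ⟨j', l, c⟩
        · exact h.elim
        · exact h.elim
        · exact h.elim
        · obtain ⟨rfl, hl⟩ := h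
          obtain rfl := eq_of_heq hl
          fin_cases c
          · exact absurd rfl hne
          · exact Or.inr (Or.inr hu)
  -- selector functions
  set f : Fin m → CWVert m p s t := fun i =>
    if Sum.inl i ∈ A then Sum.inl i else Sum.inr (Sum.inr (Sum.inl ⟨i, ⟨0, hs i⟩⟩)) with hfdef
  set g : Fin p → CWVert m p s t := fun j =>
    if ht : 0 < t j then
      (if Sum.inr (Sum.inl j) ∈ A then Sum.inr (Sum.inl j)
       else if (Sum.inr (Sum.inr (Sum.inr ⟨j, (⟨0, ht⟩, 0)⟩)) : CWVert m p s t) ∈ A then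
         Sum.inr (Sum.inr (Sum.inr ⟨j, (⟨0, ht⟩, 0)⟩))
       else Sum.inr (Sum.inr (Sum.inr ⟨j, (⟨0, ht⟩, 1)⟩)))
    else Sum.inr (Sum.inl j) with hgdef
  have hfmem : ∀ i, f i ∈ A := by
    intro i
    simp only [hfdef]
    split_ifs with h
    · exact h
    · exact (key1 i).resolve_left h
  have hgmem : ∀ j, 0 < t j → g j ∈ A := by
    intro j ht
    simp only [hgdef]
    rw [dif_pos ht]
    split_ifs with h1 h2
    · exact h1
    · exact h2
    · exact ((key2 j ht).resolve_left h1).resolve_left h2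
  have hrhof : ∀ i, CWrho (f i) = some i := by
    intro i
    simp only [hfdef]
    split_ifs <;> rfl
  have hrhog : ∀ j, CWrho (g j) = none := by
    intro j
    simp only [hgdef]
    split_ifs <;> rfl
  have hpig : ∀ j, CWpi (g j) = some j := by
    intro j
    simp only [hgdef]
    split_ifs <;> rfl
  have hfinj : Function.Injective f := by
    intro a b h
    have := congrArg CWrho h
    rw [hrhof, hrhof] at this
    exact Option.some.inj this
  have hginj : Function.Injective g := by
    intro a b h
    have := congrArg CWpi h
    rw [hpig, hpig] at this
    exact Option.some.inj this
  have hdisj : Disjoint (Finset.univ.image f)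
      ((Finset.univ.filter (fun j : Fin p => 0 < t j)).image g) := by
    rw [Finset.disjoint_left]
    rintro x hx hx'
    obtain ⟨i, -, rfl⟩ := Finset.mem_image.mp hx
    obtain ⟨j, -, hgj⟩ := Finset.mem_image.mp hx'
    have := hrhog j
    rw [hgj, hrhof] at this
    exact Option.some_ne_none _ this
  have hsub : Finset.univ.image f ∪
      (Finset.univ.filter (fun j : Fin p => 0 < t j)).image g ⊆ A := by
    intro x hx
    rcases Finset.mem_union.mp hx with hx | hx
    · obtain ⟨i, -, rfl⟩ := Finset.mem_image.mp hx
      exact hfmem i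
    · obtain ⟨j, hj, rfl⟩ := Finset.mem_image.mp hx
      exact hgmem j (Finset.mem_filter.mp hj).2
  calc m + (Finset.univ.filter (fun j : Fin p => 0 < t j)).card
      = (Finset.univ.image f).card +
        ((Finset.univ.filter (fun j : Fin p => 0 < t j)).image g).card := by
        rw [Finset.card_image_of_injective _ hfinj, Finset.card_image_of_injective _ hginj,
          Finset.card_univ, Fintype.card_fin]
    _ = (Finset.univ.image f ∪
        (Finset.univ.filter (fun j : Fin p => 0 < t j)).image g).card :=
        (Finset.card_union_of_disjoint hdisj).symm
    _ ≤ A.card := Finset.card_le_card hsub
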